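/- For every t > 0 one has (1/2)·g(t) ≤ t·g'(t) ≤ g(t). -/

import Mathlib

/-- `(1/2) g(t) ≤ t g'(t) ≤ g(t)` for every `t > 0`. -/
theorem stmt_2 (g : ℝ → ℝ) (hg0 : g 0 = 0)
    (hg : ∀ t : ℝ, HasDerivAt g ((1 + 2 * g t ^ 2) ^ (-(1 / 2) : ℝ)) t) :
    ∀ t : ℝ, 0 < t → (1 / 2) * g t ≤ t * deriv g t ∧ t * deriv g t ≤ g t := by
  have hu : ∀ s : ℝ, (0:ℝ) < 1 + 2 * g s ^ 2 := fun s => by positivity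
  set φ : ℝ → ℝ := fun s => g s * (1 + 2 * g s ^ 2) ^ ((1:ℝ)/2) with hφdef
  have e1 : ∀ s, (1 + 2 * g s ^ 2) ^ (-(1/2):ℝ) * (1 + 2 * g s ^ 2) ^ ((1:ℝ)/2) = 1 := by
    intro s
    rw [← Real.rpow_add (hu s)]
    norm_num
  have e2 : ∀ s, (1 + 2 * g s ^ 2) ^ (-(1/2):ℝ) * (1 + 2 * g s ^ 2) ^ (-(1/2):ℝ)
      = (1 + 2 * g s ^ 2)⁻¹ := by
    intro s
    rw [← Real.rpow_add (hu s)]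
    norm_num [Real.rpow_neg_one]
  have hd : ∀ s, HasDerivAt φ (1 + 2 * g s ^ 2 * (1 + 2 * g s ^ 2)⁻¹) s := by
    intro s
    have h1 : HasDerivAt (fun x => 1 + 2 * g x ^ 2)
        (2 * (2 * g s ^ 1 * ((1 + 2 * g s ^ 2) ^ (-(1/2):ℝ)))) s :=
      (((hg s).pow 2).const_mul 2).const_add 1
    have h2 := (Real.hasDerivAt_rpow_const (p := (1:ℝ)/2) (Or.inl (hu s).ne')).comp s h1
    have h3 := (hg s).mul h2
    refine h3.congr_deriv ?_
    simp only [Function.comp_apply, pow_one]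
    rw [show ((1:ℝ)/2 - 1) = (-(1/2):ℝ) by norm_num]
    nlinarith [e1 s, e2 s]
  have hD1 : ∀ s, (1:ℝ) ≤ 1 + 2 * g s ^ 2 * (1 + 2 * g s ^ 2)⁻¹ := by
    intro s
    have : (0:ℝ) ≤ 2 * g s ^ 2 * (1 + 2 * g s ^ 2)⁻¹ := by positivity
    linarith
  have hD2 : ∀ s, 1 + 2 * g s ^ 2 * (1 + 2 * g s ^ 2)⁻¹ ≤ (2:ℝ) := by
    intro s
    have h : 2 * g s ^ 2 * (1 + 2 * g s ^ 2)⁻¹ ≤ 1 := by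
      rw [← div_eq_mul_inv, div_le_one (hu s)]
      nlinarith
    linarith
  have hφ0 : φ 0 = 0 := by simp [hφdef, hg0]
  have m1 : Monotone (fun s => 2 * s - φ s) := by
    have hder : ∀ s, HasDerivAt (fun s => 2 * s - φ s)
        (2 - (1 + 2 * g s ^ 2 * (1 + 2 * g s ^ 2)⁻¹)) s := by
      intro s
      exact (((hasDerivAt_id s).const_mul 2).sub (hd s)).congr_deriv (by ring)
    exact monotone_of_deriv_nonneg (fun s => (hder s).differentiableAt)
      (fun s => by rw [(hder s).deriv]; linarith [hD2 s])
  have m2 : Monotone (fun s => φ s - s) := by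
    have hder : ∀ s, HasDerivAt (fun s => φ s - s)
        ((1 + 2 * g s ^ 2 * (1 + 2 * g s ^ 2)⁻¹) - 1) s := by
      intro s
      exact ((hd s).sub (hasDerivAt_id s)).congr_deriv (by ring)
    exact monotone_of_deriv_nonneg (fun s => (hder s).differentiableAt)
      (fun s => by rw [(hder s).deriv]; linarith [hD1 s])
  intro t ht
  have hub : φ t ≤ 2 * t := by
    have := m1 ht.le
    simp only [hφ0] at this
    linarith [this]
  have hlb : t ≤ φ t := by
    have := m2 ht.le
    simp only [hφ0] at this
    linarith [this]
  have hderiv : deriv g t = (1 + 2 * g t ^ 2) ^ (-(1/2):ℝ) := (hg t).deriv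
  have hdpos : (0:ℝ) < (1 + 2 * g t ^ 2) ^ (-(1/2):ℝ) := Real.rpow_pos_of_pos (hu t) _
  rw [hderiv]
  constructor
  · have := mul_le_mul_of_nonneg_right hub hdpos.le
    have hgg : φ t * (1 + 2 * g t ^ 2) ^ (-(1/2):ℝ) = g t := by
      simp only [hφdef]
      rw [mul_assoc, mul_comm ((1 + 2 * g t ^ 2) ^ ((1:ℝ)/2)), e1 t, mul_one]
    rw [hgg] at this
    linarith
  · have := mul_le_mul_of_nonneg_right hlb hdpos.le
    have hgg : φ t * (1 + 2 * g t ^ 2) ^ (-(1/2):ℝ) = g t := by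
      simp only [hφdef]
      rw [mul_assoc, mul_comm ((1 + 2 * g t ^ 2) ^ ((1:ℝ)/2)), e1 t, mul_one]
    rw [hgg] at this
    linarith
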